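/- Let G be a tree and e = uv an edge with deg(u) ≥ 3 and deg(v) ≥ 3, or with deg(u) = 1 and deg(v) = 2. Then meg(G \ {e}) = meg(G). -/

import Mathlib

open SimpleGraph

variable {V : Type*}

/-- A pair of vertices `u, v` monitors edge `e` in `G` if `u` and `v` are connected
and `e` lies on every shortest path (walk of length `G.dist u v`) between them. -/
def monitors (G : SimpleGraph V) (u v : V) (e : Sym2 V) : Prop :=
  G.Reachable u v ∧ ∀ p : G.Walk u v, p.length = G.dist u v → e ∈ p.edges

/-- `M` is a monitoring edge-geodetic set of `G`. -/
def IsMEGSet (G : SimpleGraph V) (M : Set V) : Prop :=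
  ∀ e ∈ G.edgeSet, ∃ u ∈ M, ∃ v ∈ M, monitors G u v e

/-- The monitoring edge-geodetic number: minimum size of an MEG-set. -/
noncomputable def meg (G : SimpleGraph V) : ℕ :=
  sInf {n | ∃ M : Finset V, IsMEGSet G ↑M ∧ M.card = n}


/-- internal vertices of a path have degree ≥ 2 -/
lemma degree_two_le_of_internal [Fintype V] {H : SimpleGraph V} [DecidableRel H.Adj]
    {a b x : V} (p : H.Walk a b) (hp : p.IsPath) (hx : x ∈ p.support)
    (hxa : x ≠ a) (hxb : x ≠ b) : 2 ≤ H.degree x := by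
  induction p with
  | nil => simp at hx; exact absurd hx hxa
  | @cons a c b h q ih =>
    rw [SimpleGraph.Walk.support_cons, List.mem_cons] at hx
    rcases hx with rfl | hx
    · exact absurd rfl hxa
    rw [SimpleGraph.Walk.cons_isPath_iff] at hp
    by_cases hxc : x = c
    · subst hxc
      cases q with
      | nil => exact absurd rfl hxb
      | @cons _ d _ h2 r =>
        have ha : a ∈ H.neighborFinset x := by
          rw [SimpleGraph.mem_neighborFinset]; exact h.symm
        have hd : d ∈ H.neighborFinset x := by
          rw [SimpleGraph.mem_neighborFinset]; exact h2
        have had : a ≠ d := by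
          rintro rfl
          exact hp.2 (by simp)
        rw [SimpleGraph.degree]
        exact Finset.one_lt_card_iff.mpr ⟨a, d, ha, hd, had⟩
    · exact ih hp.1 hx hxc hxb

/-- In an acyclic graph, any pair of endpoints of a path monitors all edges of the path. -/
lemma monitors_of_path {H : SimpleGraph V} (hA : H.IsAcyclic) {a b : V}
    (p : H.Walk a b) (hp : p.IsPath) {e : Sym2 V} (he : e ∈ p.edges) :
    monitors H a b e := by
  classical
  refine ⟨⟨p⟩, fun q _ => ?_⟩
  have h1 : (⟨q.bypass, q.bypass_isPath⟩ : H.Path a b) = ⟨p, hp⟩ := hA.path_unique _ _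
  have h2 : q.bypass = p := congrArg Subtype.val h1
  exact q.edges_bypass_subset (h2 ▸ he)

/-- A leaf whose pendant edge is monitored by a pair must be one of the pair. -/
lemma eq_of_monitors_pendant [Fintype V] {H : SimpleGraph V} [DecidableRel H.Adj]
    (hA : H.IsAcyclic) {a b x w : V} (hm : monitors H a b s(x, w))
    (hx : H.degree x = 1) : x = a ∨ x = b := by
  classical
  obtain ⟨wk⟩ := hm.1
  set r := wk.bypass with hr
  have hrp : r.IsPath := wk.bypass_isPath
  -- r has length equal to dist
  obtain ⟨w0, hw0⟩ := hm.1.exists_walk_length_eq_dist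
  have h1 : (⟨w0.bypass, w0.bypass_isPath⟩ : H.Path a b) = ⟨r, hrp⟩ := hA.path_unique _ _
  have h2 : w0.bypass = r := congrArg Subtype.val h1
  have hlen : r.length = H.dist a b := by
    have := w0.length_bypass_le
    rw [h2] at this
    exact le_antisymm (hw0 ▸ this) (SimpleGraph.dist_le r)
  have hmem : s(x, w) ∈ r.edges := hm.2 r hlen
  have hxs : x ∈ r.support := r.fst_mem_support_of_mem_edges hmem
  by_contra hcon
  push_neg at hcon
  have := degree_two_le_of_internal r hrp hxs hcon.1 hcon.2
  omega

/-- extend a nontrivial path on the left until it hits a leaf -/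
lemma exists_leaf_extension [Fintype V] {H : SimpleGraph V} [DecidableRel H.Adj]
    (hA : H.IsAcyclic) :
    ∀ (n : ℕ) {a b : V} (p : H.Walk a b), p.IsPath → p.length ≠ 0 →
      Fintype.card V - p.length ≤ n →
      ∃ (a' : V) (q : H.Walk a' b), q.IsPath ∧ H.degree a' = 1 ∧ q.length ≠ 0 ∧
        ∀ e ∈ p.edges, e ∈ q.edges := by
  intro n
  induction n with
  | zero =>
    intro a b p hp hne hcard
    have := hp.length_lt
    omega
  | succ n ih =>
    intro a b p hp hne hcard
    by_cases hd : H.degree a = 1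
    · exact ⟨a, p, hp, hd, hne, fun e he => he⟩
    cases p with
    | nil => simp at hne
    | @cons _ c _ h q =>
      classical
      have hcmem : c ∈ H.neighborFinset a := by
        rw [SimpleGraph.mem_neighborFinset]; exact h
      have hdeg1 : 1 ≤ H.degree a := by
        rw [← SimpleGraph.card_neighborFinset_eq_degree]
        exact Finset.card_pos.mpr ⟨c, hcmem⟩
      have hdeg2 : 2 ≤ H.degree a := by omega
      have hlt : 1 < (H.neighborFinset a).card := by
        rwa [SimpleGraph.card_neighborFinset_eq_degree]
      obtain ⟨z, hz, hzc⟩ := Finset.exists_mem_ne hlt c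
      rw [SimpleGraph.mem_neighborFinset] at hz
      have hzs : z ∉ (Walk.cons h q).support := by
        intro hzs
        have htp : ((Walk.cons h q).takeUntil z hzs).IsPath := hp.takeUntil hzs
        have hzp : (hz.toWalk).IsPath := by
          simp [Walk.cons_isPath_iff, hz.ne]
        have h1 : (⟨(Walk.cons h q).takeUntil z hzs, htp⟩ : H.Path a z)
            = ⟨hz.toWalk, hzp⟩ := hA.path_unique _ _
        have h2 : (Walk.cons h q).takeUntil z hzs = hz.toWalk :=
          congrArg Subtype.val h1
        have h3 := (Walk.cons h q).take_spec hzs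
        rw [h2] at h3
        have h4 : Walk.cons hz ((Walk.cons h q).dropUntil z hzs) = Walk.cons h q := h3
        have h5 := congrArg Walk.support h4
        rw [Walk.support_cons, Walk.support_cons] at h5
        have h6 := congrArg List.tail h5
        simp only [List.tail_cons] at h6
        have : z = c := by
          have h7 := congrArg List.head? h6
          rw [((Walk.cons h q).dropUntil z hzs).support_eq_cons, q.support_eq_cons] at h7
          simp only [List.head?_cons, Option.some.injEq] at h7
          exact h7
        exact hzc this
      have hp2 : (Walk.cons hz.symm (Walk.cons h q)).IsPath := by
        rw [Walk.cons_isPath_iff]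
        exact ⟨hp, hzs⟩
      obtain ⟨a', q', hq', hda', hne', hsub⟩ := ih (Walk.cons hz.symm (Walk.cons h q)) hp2
        (by simp) (by simp only [Walk.length_cons] at hcard ⊢; omega)
      exact ⟨a', q', hq', hda', hne', fun e he => hsub e (by simp [Walk.edges_cons]; right; simpa using he)⟩

/-- every nontrivial path extends to a leaf-to-leaf path -/
lemma exists_leaf_path [Fintype V] {H : SimpleGraph V} [DecidableRel H.Adj]
    (hA : H.IsAcyclic) {a b : V} (p : H.Walk a b) (hp : p.IsPath) (hne : p.length ≠ 0) :
    ∃ (a' b' : V) (q : H.Walk a' b'), q.IsPath ∧ H.degree a' = 1 ∧ H.degree b' = 1 ∧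
      ∀ e ∈ p.edges, e ∈ q.edges := by
  obtain ⟨a', q1, hq1, hda', hne1, hsub1⟩ :=
    exists_leaf_extension hA (Fintype.card V) p hp hne (Nat.sub_le _ _)
  obtain ⟨b', q2, hq2, hdb', hne2, hsub2⟩ :=
    exists_leaf_extension hA (Fintype.card V) q1.reverse hq1.reverse
      (by simpa using hne1) (Nat.sub_le _ _)
  refine ⟨b', a', q2, hq2, hdb', hda', fun e he => ?_⟩
  exact hsub2 e (by rw [Walk.edges_reverse, List.mem_reverse]; exact hsub1 e he)

/-- For a finite acyclic graph, MEG-sets are exactly the sets containing all leaves. -/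
lemma isMEGSet_iff_leaves [Fintype V] {H : SimpleGraph V} [DecidableRel H.Adj]
    (hA : H.IsAcyclic) (M : Set V) :
    IsMEGSet H M ↔ ∀ x : V, H.degree x = 1 → x ∈ M := by
  constructor
  · intro hM x hx
    have hpos : 0 < (H.neighborFinset x).card := by
      rw [SimpleGraph.card_neighborFinset_eq_degree, hx]; norm_num
    obtain ⟨w, hw⟩ := Finset.card_pos.mp hpos
    rw [SimpleGraph.mem_neighborFinset] at hw
    obtain ⟨u', hu', v', hv', hm⟩ := hM s(x, w) hw
    rcases eq_of_monitors_pendant hA hm hx with rfl | rfl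
    · exact hu'
    · exact hv'
  · intro hL e he
    induction e with
    | h x y =>
      rw [SimpleGraph.mem_edgeSet] at he
      have hp : (he.toWalk).IsPath := by simp [Walk.cons_isPath_iff, he.ne]
      obtain ⟨a', b', q, hq, hda', hdb', hsub⟩ := exists_leaf_path hA he.toWalk hp (by simp)
      exact ⟨a', hL a' hda', b', hL b' hdb',
        monitors_of_path hA q hq (hsub s(x, y) (by simp))⟩

/-- meg of a finite acyclic graph equals its number of leaves -/
lemma meg_eq_card_leaves [Fintype V] (H : SimpleGraph V) [DecidableRel H.Adj]
    (hA : H.IsAcyclic) :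
    meg H = (Finset.univ.filter (fun x => H.degree x = 1)).card := by
  have hmem : (Finset.univ.filter (fun x => H.degree x = 1)).card ∈
      {n | ∃ M : Finset V, IsMEGSet H ↑M ∧ M.card = n} := by
    refine ⟨Finset.univ.filter (fun x => H.degree x = 1), ?_, rfl⟩
    rw [isMEGSet_iff_leaves hA]
    intro x hx
    simp [hx]
  refine le_antisymm (Nat.sInf_le hmem) (le_csInf ⟨_, hmem⟩ ?_)
  rintro n ⟨M, hM, rfl⟩
  refine Finset.card_le_card ?_
  intro x hx
  rw [Finset.mem_filter] at hx
  exact (isMEGSet_iff_leaves hA ↑M).mp hM x hx.2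

/-- Removing an edge `uv` from a tree, with `deg u ≥ 3 ∧ deg v ≥ 3` or with
`deg u = 1 ∧ deg v = 2`, leaves `meg` unchanged. -/
theorem tree_deleteEdge_meg_unchanged [Fintype V] (G : SimpleGraph V) [DecidableRel G.Adj]
    (hT : G.IsTree) (u v : V) (huv : G.Adj u v)
    (h : (3 ≤ G.degree u ∧ 3 ≤ G.degree v) ∨ (G.degree u = 1 ∧ G.degree v = 2)) :
    meg (G.deleteEdges {s(u, v)}) = meg G := by
  classical
  set G' := G.deleteEdges {s(u, v)} with hG'def
  haveI hdec : DecidableRel G'.Adj := fun a b => Classical.dec _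
  have hne : u ≠ v := huv.ne
  have hA : G.IsAcyclic := hT.IsAcyclic
  have hA' : G'.IsAcyclic := by
    intro a c hc
    exact hA (c.mapLe (G.deleteEdges_le _)) (hc.mapLe (G.deleteEdges_le _))
  -- neighbor finsets
  have hadj : ∀ a b : V, G'.Adj a b ↔ G.Adj a b ∧ s(a, b) ≠ s(u, v) := by
    intro a b
    rw [hG'def, SimpleGraph.deleteEdges_adj]
    simp
  have hNu : G'.neighborFinset u = (G.neighborFinset u).erase v := by
    ext x
    rw [SimpleGraph.mem_neighborFinset, Finset.mem_erase, SimpleGraph.mem_neighborFinset,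
      hadj]
    simp only [ne_eq, Sym2.eq_iff, not_or]
    tauto
  have hNv : G'.neighborFinset v = (G.neighborFinset v).erase u := by
    ext x
    rw [SimpleGraph.mem_neighborFinset, Finset.mem_erase, SimpleGraph.mem_neighborFinset,
      hadj]
    simp only [ne_eq, Sym2.eq_iff, not_or]
    tauto
  have hNother : ∀ x : V, x ≠ u → x ≠ v → G'.neighborFinset x = G.neighborFinset x := by
    intro x hxu hxv
    ext y
    rw [SimpleGraph.mem_neighborFinset, SimpleGraph.mem_neighborFinset, hadj]
    simp only [ne_eq, Sym2.eq_iff, not_or]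
    tauto
  have hvmem : v ∈ G.neighborFinset u := by
    rw [SimpleGraph.mem_neighborFinset]; exact huv
  have humem : u ∈ G.neighborFinset v := by
    rw [SimpleGraph.mem_neighborFinset]; exact huv.symm
  have hdu : G'.degree u = G.degree u - 1 := by
    rw [← SimpleGraph.card_neighborFinset_eq_degree, ← SimpleGraph.card_neighborFinset_eq_degree,
      hNu, Finset.card_erase_of_mem hvmem]
  have hdv : G'.degree v = G.degree v - 1 := by
    rw [← SimpleGraph.card_neighborFinset_eq_degree, ← SimpleGraph.card_neighborFinset_eq_degree,
      hNv, Finset.card_erase_of_mem humem]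
  have hdother : ∀ x : V, x ≠ u → x ≠ v → G'.degree x = G.degree x := by
    intro x hxu hxv
    rw [← SimpleGraph.card_neighborFinset_eq_degree, ← SimpleGraph.card_neighborFinset_eq_degree,
      hNother x hxu hxv]
  rw [meg_eq_card_leaves G' hA', meg_eq_card_leaves G hA]
  rcases h with ⟨h3u, h3v⟩ | ⟨h1u, h2v⟩
  · -- both degrees ≥ 3 : leaves unchanged
    congr 1
    ext x
    simp only [Finset.mem_filter, Finset.mem_univ, true_and]
    by_cases hxu : x = u
    · subst hxu; rw [hdu]; omega
    by_cases hxv : x = v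
    · subst hxv; rw [hdv]; omega
    rw [hdother x hxu hxv]
  · -- deg u = 1, deg v = 2
    have hset : Finset.univ.filter (fun x => G'.degree x = 1)
        = insert v ((Finset.univ.filter (fun x => G.degree x = 1)).erase u) := by
      ext x
      simp only [Finset.mem_filter, Finset.mem_univ, true_and, Finset.mem_insert,
        Finset.mem_erase]
      by_cases hxu : x = u
      · subst hxu
        rw [hdu, h1u]
        simp [hne]
      by_cases hxv : x = v
      · subst hxv
        rw [hdv, h2v]
        simp
      · rw [hdother x hxu hxv]
        simp [hxu, hxv]
    rw [hset]
    have humemL : u ∈ Finset.univ.filter (fun x => G.degree x = 1) := by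
      simp [h1u]
    have hvnot : v ∉ (Finset.univ.filter (fun x => G.degree x = 1)).erase u := by
      simp [h2v]
    rw [Finset.card_insert_of_notMem hvnot, Finset.card_erase_of_mem humemL]
    have : 0 < (Finset.univ.filter (fun x => G.degree x = 1)).card :=
      Finset.card_pos.mpr ⟨u, humemL⟩
    omega
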